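/- arXiv:1504.06989 — 3 statements merged into one kernel-verified Lean document; each statement's English description precedes it below -/
import Mathlib

section
/- Let A ⊂ ℝ be a finite set with |A| = n^{1/2} (n a perfect square) that is of SzT-type with parameter α = 2 and coefficient d > 0, and let k ≥ 1 be real. Then there is an absolute constant C > 0 such that the number of points (a,b) ∈ A² for which the line (a,b) + ℝ(1,1) contains at least k points of A² is at most C · d · n^{3/2} / k². -/
open scoped Pointwise Classical

/-- `delta X Y s` is the number of representations of `s` as `x - y`, `x ∈ X`, `y ∈ Y`. -/
noncomputable def delta (X Y : Finset ℝ) (s : ℝ) : ℕ :=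
  ((X ×ˢ Y).filter fun p => p.1 - p.2 = s).card

/-- `X` is of Szemerédi–Trotter type with parameter `α = 2` and coefficient `d`. -/
def SzTType2 (X : Finset ℝ) (d : ℝ) : Prop :=
  ∀ (Y : Finset ℝ) (τ : ℝ), 1 ≤ τ →
    (((X - Y).filter fun s => τ ≤ (delta X Y s : ℝ)).card : ℝ)
      ≤ d * X.card * (Y.card : ℝ) ^ 2 / τ ^ 3

lemma delta_le_card (A : Finset ℝ) (s : ℝ) : delta A A s ≤ A.card := by
  classical
  unfold delta
  apply Finset.card_le_card_of_injOn (fun p => p.1)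
  · intro p hp
    simp only [Finset.mem_coe, Finset.mem_filter, Finset.mem_product] at hp
    exact hp.1.1
  · intro p hp q hq h
    simp only [Finset.coe_filter, Set.mem_setOf_eq, Finset.mem_product] at hp hq
    dsimp at h
    exact Prod.ext h (by linarith [hp.2, hq.2])

theorem rich_diagonal_lines_in_grid :
    ∃ C : ℝ, 0 < C ∧ ∀ (n m : ℕ) (A : Finset ℝ) (d k : ℝ),
      n = m ^ 2 → A.card = m → 0 < d → SzTType2 A d → 1 ≤ k →
      (((A ×ˢ A).filter fun p =>
          k ≤ (((A ×ˢ A).filter fun q =>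
            ∃ t : ℝ, q.1 = p.1 + t ∧ q.2 = p.2 + t).card : ℝ)).card : ℝ)
        ≤ C * d * (n : ℝ) ^ ((3 : ℝ) / 2) / k ^ 2 := by
  classical
  refine ⟨8, by norm_num, ?_⟩
  intro n m A d k hn hm hd hSzT hk
  subst hn
  subst hm
  set m := A.card with hmdef
  set M : ℝ := (A.card : ℝ) with hM
  have hk0 : (0 : ℝ) < k := lt_of_lt_of_le one_pos hk
  -- Step 1: rewrite the inner counting as `delta A A (p.1 - p.2)`
  have h1 : ((A ×ˢ A).filter fun p =>
      k ≤ (((A ×ˢ A).filter fun q =>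
        ∃ t : ℝ, q.1 = p.1 + t ∧ q.2 = p.2 + t).card : ℝ))
      = (A ×ˢ A).filter (fun p => k ≤ (delta A A (p.1 - p.2) : ℝ)) := by
    apply Finset.filter_congr
    intro p _
    have hset : ((A ×ˢ A).filter fun q => ∃ t : ℝ, q.1 = p.1 + t ∧ q.2 = p.2 + t)
        = ((A ×ˢ A).filter fun q => q.1 - q.2 = p.1 - p.2) := by
      apply Finset.filter_congr
      intro q _
      constructor
      · rintro ⟨t, ht1, ht2⟩
        simp only [ht1, ht2]
        ring
      · intro h
        exact ⟨q.1 - p.1, by ring, by linarith⟩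
    rw [hset]
    rfl
  rw [h1]
  -- Step 2: count fibers over differences
  set S : Finset ℝ := (A - A).filter (fun s => k ≤ (delta A A s : ℝ)) with hS
  have h2 : ((A ×ˢ A).filter (fun p => k ≤ (delta A A (p.1 - p.2) : ℝ))).card
      = ∑ s ∈ S, delta A A s := by
    rw [Finset.card_eq_sum_card_fiberwise (f := fun p => p.1 - p.2) (t := S)
      (by
        intro p hp
        simp only [Finset.mem_coe, Finset.mem_filter, Finset.mem_product] at hp
        exact Finset.mem_filter.2 ⟨Finset.sub_mem_sub hp.1.1 hp.1.2, hp.2⟩)]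
    apply Finset.sum_congr rfl
    intro s hs
    simp only [hS, Finset.mem_filter] at hs
    unfold delta
    congr 1
    rw [Finset.filter_filter]
    apply Finset.filter_congr
    intro p _
    constructor
    · exact fun h => h.2
    · intro h
      exact ⟨by rw [h]; exact hs.2, h⟩
  rw [h2]
  -- Step 3: layer cake
  have hδle : ∀ s : ℝ, delta A A s ≤ m := fun s => delta_le_card A s
  have h3 : ∑ s ∈ S, delta A A s
      = ∑ t ∈ Finset.range m, (S.filter fun s => t < delta A A s).card := by
    have : ∀ s ∈ S, delta A A s
        = ∑ t ∈ Finset.range m, (if t < delta A A s then 1 else 0) := by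
      intro s _
      rw [← Finset.card_filter]
      have : (Finset.range m).filter (fun t => t < delta A A s)
          = Finset.range (delta A A s) := by
        ext t
        simp only [Finset.mem_filter, Finset.mem_range]
        have := hδle s
        omega
      rw [this, Finset.card_range]
    rw [Finset.sum_congr rfl this, Finset.sum_comm]
    apply Finset.sum_congr rfl
    intro t _
    rw [← Finset.card_filter]
  rw [h3]
  push_cast
  -- Step 4: bound each layer via SzT
  have h4 : ∀ t : ℕ, ((S.filter fun s => t < delta A A s).card : ℝ)
      ≤ d * M * M ^ 2 / (max k ((t : ℝ) + 1)) ^ 3 := by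
    intro t
    set τ : ℝ := max k ((t : ℝ) + 1) with hτ
    have hτ1 : 1 ≤ τ := le_trans hk (le_max_left _ _)
    have hsub : S.filter (fun s => t < delta A A s)
        ⊆ (A - A).filter (fun s => τ ≤ (delta A A s : ℝ)) := by
      intro s hs
      simp only [hS, Finset.mem_filter] at hs ⊢
      obtain ⟨⟨hmem, hks⟩, hts⟩ := hs
      refine ⟨hmem, max_le hks ?_⟩
      have : (t : ℕ) + 1 ≤ delta A A s := hts
      exact_mod_cast this
    calc ((S.filter fun s => t < delta A A s).card : ℝ)
        ≤ (((A - A).filter (fun s => τ ≤ (delta A A s : ℝ))).card : ℝ) := by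
          exact_mod_cast Finset.card_le_card hsub
      _ ≤ d * M * M ^ 2 / τ ^ 3 := hSzT A τ hτ1
  -- Step 5: telescoping bound
  have h5 : ∀ t : ℕ, d * M * M ^ 2 / (max k ((t : ℝ) + 1)) ^ 3
      ≤ (8 * d * M ^ 3 / k) * (1 / (k + t) - 1 / (k + t + 1)) := by
    intro t
    set τ : ℝ := max k ((t : ℝ) + 1) with hτ
    have hτk : k ≤ τ := le_max_left _ _
    have hτt : (t : ℝ) + 1 ≤ τ := le_max_right _ _
    have hτ0 : 0 < τ := lt_of_lt_of_le hk0 hτk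
    have ht0 : (0 : ℝ) < k + t := by positivity
    have ht1 : (0 : ℝ) < k + t + 1 := by positivity
    have htele : 1 / (k + (t : ℝ)) - 1 / (k + t + 1)
        = 1 / ((k + t) * (k + t + 1)) := by
      field_simp
      ring
    rw [htele]
    have h2τ : k + (t : ℝ) + 1 ≤ 2 * τ := by linarith
    have ha : (k + (t : ℝ)) * (k + t + 1) ≤ (2 * τ) * (2 * τ) :=
      mul_le_mul (by linarith) h2τ ht1.le (by linarith)
    have hb : k * ((2 * τ) * (2 * τ)) ≤ τ * ((2 * τ) * (2 * τ)) :=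
      mul_le_mul_of_nonneg_right hτk (by positivity)
    have key : k * ((k + (t : ℝ)) * (k + t + 1)) ≤ 8 * τ ^ 3 := by
      nlinarith [mul_le_mul_of_nonneg_left ha hk0.le, pow_pos hτ0 3]
    have hM3 : (0 : ℝ) ≤ d * M ^ 3 := by positivity
    have hlhs : d * M * M ^ 2 = d * M ^ 3 := by ring
    have hrhs : (8 * d * M ^ 3 / k) * (1 / ((k + (t : ℝ)) * (k + t + 1)))
        = 8 * d * M ^ 3 / (k * ((k + (t : ℝ)) * (k + t + 1))) := by
      rw [div_mul_div_comm, mul_one]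
    rw [hlhs, hrhs, div_le_div_iff₀ (by positivity) (by positivity)]
    calc d * M ^ 3 * (k * ((k + (t : ℝ)) * (k + t + 1)))
        ≤ d * M ^ 3 * (8 * τ ^ 3) := mul_le_mul_of_nonneg_left key hM3
      _ = 8 * d * M ^ 3 * τ ^ 3 := by ring
  have h6 : ∑ t ∈ Finset.range m, ((S.filter fun s => t < delta A A s).card : ℝ)
      ≤ ∑ t ∈ Finset.range m, (8 * d * M ^ 3 / k) * (1 / (k + t) - 1 / (k + t + 1)) :=
    Finset.sum_le_sum fun t _ => le_trans (h4 t) (h5 t)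
  have h7 : ∑ t ∈ Finset.range m, (8 * d * M ^ 3 / k) * (1 / (k + t) - 1 / (k + t + 1))
      = (8 * d * M ^ 3 / k) * (1 / k - 1 / (k + m)) := by
    rw [← Finset.mul_sum]
    congr 1
    have := Finset.sum_range_sub' (f := fun i : ℕ => 1 / (k + (i : ℝ))) (n := m)
    simp only [Nat.cast_add, Nat.cast_one, Nat.cast_zero, add_zero] at this
    rw [← this]
    apply Finset.sum_congr rfl
    intro t _
    push_cast
    ring_nf
  have h8 : (8 * d * M ^ 3 / k) * (1 / k - 1 / (k + m)) ≤ 8 * d * M ^ 3 / k ^ 2 := by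
    have hkm : (0 : ℝ) < k + m := by positivity
    have : 1 / k - 1 / (k + (m : ℝ)) ≤ 1 / k := by
      have : (0 : ℝ) ≤ 1 / (k + (m : ℝ)) := by positivity
      linarith
    calc (8 * d * M ^ 3 / k) * (1 / k - 1 / (k + m))
        ≤ (8 * d * M ^ 3 / k) * (1 / k) := by
          apply mul_le_mul_of_nonneg_left this (by positivity)
      _ = 8 * d * M ^ 3 / k ^ 2 := by
          rw [div_mul_div_comm, mul_one, ← sq]
  have hpow : ((m : ℝ) ^ 2) ^ ((3 : ℝ) / 2) = M ^ 3 := by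
    have h0 : (0 : ℝ) ≤ M := Nat.cast_nonneg _
    have hMm : ((m : ℝ)) = M := rfl
    rw [hMm, ← Real.rpow_natCast M 2, ← Real.rpow_mul h0,
      show ((2 : ℕ) : ℝ) * ((3 : ℝ) / 2) = ((3 : ℕ) : ℝ) by norm_num,
      Real.rpow_natCast]
  calc ∑ t ∈ Finset.range m, ((S.filter fun s => t < delta A A s).card : ℝ)
      ≤ (8 * d * M ^ 3 / k) * (1 / k - 1 / (k + m)) := h7 ▸ h6
    _ ≤ 8 * d * M ^ 3 / k ^ 2 := h8
    _ = 8 * d * ((m : ℝ) ^ 2) ^ ((3 : ℝ) / 2) / k ^ 2 := by rw [hpow]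
end

section
/- Let A, B ⊂ ℝ be finite sets with |A| = |B| = n^{1/2} ≥ 2 (n a perfect square), where A is of SzT-type with parameter α = 2 and coefficient d_A > 0 and B is of SzT-type with parameter α = 2 and coefficient d_B > 0, and let k ≥ 1 be real. Then there is an absolute constant C > 0 such that the number of rich-rich unit-area triangles spanned by S = A × B (with respect to the richness parameter k) is at most C · (d_A² · d_B · n^{7/2} · (log n) / k⁵ + n²). -/
open scoped Pointwise Classical

/-- `(a,b,c) ∈ A³` is `k`-rich if the line `(a,b,c) + ℝ(1,1,1)` contains at
least `k` points of `A³`. -/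
def IsRich (A : Finset ℝ) (k : ℝ) (a b c : ℝ) : Prop :=
  k ≤ (((A ×ˢ A ×ˢ A).filter fun q =>
    ∃ t : ℝ, q.1 = a + t ∧ q.2.1 = b + t ∧ q.2.2 = c + t).card : ℝ)

/-- The unordered triples of points of `A × B` spanning a triangle of area `1`
that are rich-rich with respect to the richness parameter `k`. -/
noncomputable def richRichTriangles (A B : Finset ℝ) (k : ℝ) : Finset (Finset (ℝ × ℝ)) :=
  ((A ×ˢ B).powersetCard 3).filter fun T => ∃ p q r : ℝ × ℝ, T = {p, q, r} ∧
    |(q.1 - p.1) * (r.2 - p.2) - (q.2 - p.2) * (r.1 - p.1)| = 2 ∧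
    IsRich A k p.1 q.1 r.1 ∧ IsRich B k p.2 q.2 r.2

lemma delta_eq (X Y : Finset ℝ) (s : ℝ) :
    delta X Y s = (Y.filter fun v => v + s ∈ X).card := by
  unfold delta
  apply Finset.card_bij' (fun p _ => p.2) (fun v _ => (v + s, v))
  · intro p hp
    simp only [Finset.mem_filter, Finset.mem_product] at hp ⊢
    refine ⟨hp.1.2, ?_⟩
    have h2 := hp.2
    have hx : p.2 + s = p.1 := by linarith
    rw [hx]; exact hp.1.1
  · intro v hv
    simp only [Finset.mem_filter] at hv ⊢
    exact ⟨Finset.mem_product.2 ⟨hv.2, hv.1⟩, by ring⟩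
  · intro p hp
    simp only [Finset.mem_filter, Finset.mem_product] at hp
    have : p.1 = p.2 + s := by have := hp.2; linarith
    ext <;> simp [← this]
  · intro v hv; rfl

-- first moment lemma
lemma moment_aux1 {α : Type*} (D : Finset α) (f : α → ℕ) (c : ℝ)
    (H : ∀ τ : ℝ, 1 ≤ τ → ((D.filter fun s => τ ≤ (f s : ℝ)).card : ℝ) ≤ c / τ ^ 3) :
    ∀ (j : ℕ) (k : ℝ), 1 ≤ k → (∀ s ∈ D, (f s : ℝ) < 2 ^ j * k) →
      ∑ s ∈ D.filter (fun s => k ≤ (f s : ℝ)), (f s : ℝ) ≤ 4 * c / k ^ 2 := by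
  have hc : 0 ≤ c := by
    have := H 1 le_rfl
    have h0 : (0:ℝ) ≤ ((D.filter fun s => (1:ℝ) ≤ (f s : ℝ)).card : ℝ) := by positivity
    nlinarith
  intro j
  induction j with
  | zero =>
    intro k hk hlt
    have : D.filter (fun s => k ≤ (f s : ℝ)) = ∅ := by
      apply Finset.filter_false_of_mem
      intro s hs
      have := hlt s hs
      simp only [pow_zero, one_mul] at this
      linarith
    rw [this]
    simp
    positivity
  | succ j ih =>
    intro k hk hlt
    have hk0 : 0 < k := by linarith
    rw [← Finset.sum_filter_add_sum_filter_not (D.filter fun s => k ≤ (f s : ℝ))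
      (fun s => 2 * k ≤ (f s : ℝ))]
    have h1 : (D.filter fun s => k ≤ (f s : ℝ)).filter (fun s => 2 * k ≤ (f s : ℝ))
        = D.filter (fun s => 2 * k ≤ (f s : ℝ)) := by
      rw [Finset.filter_filter]
      apply Finset.filter_congr
      intro s _
      constructor
      · exact fun h => h.2
      · exact fun h => ⟨by linarith, h⟩
    have htail : ∑ s ∈ (D.filter fun s => k ≤ (f s : ℝ)).filter (fun s => 2 * k ≤ (f s : ℝ)),
        (f s : ℝ) ≤ 4 * c / (2 * k) ^ 2 := by
      rw [h1]
      apply ih (2 * k) (by linarith)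
      intro s hs
      have := hlt s hs
      calc (f s : ℝ) < 2 ^ (j + 1) * k := this
        _ = 2 ^ j * (2 * k) := by ring
    have hmain : ∑ s ∈ (D.filter fun s => k ≤ (f s : ℝ)).filter (fun s => ¬ 2 * k ≤ (f s : ℝ)),
        (f s : ℝ) ≤ 2 * k * (c / k ^ 3) := by
      calc ∑ s ∈ (D.filter fun s => k ≤ (f s : ℝ)).filter (fun s => ¬ 2 * k ≤ (f s : ℝ)),
            (f s : ℝ)
          ≤ ∑ _s ∈ (D.filter fun s => k ≤ (f s : ℝ)).filter (fun s => ¬ 2 * k ≤ (f s : ℝ)),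
            (2 * k) := by
            apply Finset.sum_le_sum
            intro s hs
            simp only [Finset.mem_filter] at hs
            linarith [hs.2]
        _ = ((D.filter fun s => k ≤ (f s : ℝ)).filter (fun s => ¬ 2 * k ≤ (f s : ℝ))).card
            * (2 * k) := by rw [Finset.sum_const, nsmul_eq_mul]
        _ ≤ ((D.filter fun s => k ≤ (f s : ℝ)).card : ℝ) * (2 * k) := by
            apply mul_le_mul_of_nonneg_right _ (by linarith)
            exact_mod_cast Finset.card_le_card (Finset.filter_subset _ _)
        _ ≤ (c / k ^ 3) * (2 * k) := by
            apply mul_le_mul_of_nonneg_right (H k hk) (by linarith)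
        _ = 2 * k * (c / k ^ 3) := by ring
    have : 2 * k * (c / k ^ 3) + 4 * c / (2 * k) ^ 2 ≤ 4 * c / k ^ 2 := by
      have e1 : 2 * k * (c / k ^ 3) = 2 * (c / k ^ 2) := by field_simp
      have e2 : 4 * c / (2 * k) ^ 2 = c / k ^ 2 := by field_simp; ring
      have e3 : (0:ℝ) ≤ c / k ^ 2 := by positivity
      have e4 : 4 * c / k ^ 2 = 4 * (c / k ^ 2) := by ring
      rw [e1, e2, e4]; linarith
    linarith

lemma moment1 {α : Type*} (D : Finset α) (f : α → ℕ) (c k : ℝ) (hk : 1 ≤ k)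
    (H : ∀ τ : ℝ, 1 ≤ τ → ((D.filter fun s => τ ≤ (f s : ℝ)).card : ℝ) ≤ c / τ ^ 3) :
    ∑ s ∈ D.filter (fun s => k ≤ (f s : ℝ)), (f s : ℝ) ≤ 4 * c / k ^ 2 := by
  apply moment_aux1 D f c H (D.sup f) k hk
  intro s hs
  have h1 : f s ≤ D.sup f := Finset.le_sup hs
  have h2 : D.sup f < 2 ^ (D.sup f) := Nat.lt_two_pow_self
  have : (f s : ℝ) < (2:ℝ) ^ (D.sup f) := by
    exact_mod_cast lt_of_le_of_lt h1 h2
  calc (f s : ℝ) < (2:ℝ) ^ (D.sup f) := this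
    _ ≤ 2 ^ (D.sup f) * k := le_mul_of_one_le_right (by positivity) hk

-- second moment lemma
lemma moment_aux2 {α : Type*} (D : Finset α) (f : α → ℕ) (c : ℝ)
    (H : ∀ τ : ℝ, 1 ≤ τ → ((D.filter fun s => τ ≤ (f s : ℝ)).card : ℝ) ≤ c / τ ^ 3) :
    ∀ (j : ℕ) (k : ℝ), 1 ≤ k → (∀ s ∈ D, (f s : ℝ) < 2 ^ j * k) →
      ∑ s ∈ D.filter (fun s => k ≤ (f s : ℝ)), (f s : ℝ) ^ 2 ≤ 8 * c / k := by
  have hc : 0 ≤ c := by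
    have := H 1 le_rfl
    have h0 : (0:ℝ) ≤ ((D.filter fun s => (1:ℝ) ≤ (f s : ℝ)).card : ℝ) := by positivity
    nlinarith
  intro j
  induction j with
  | zero =>
    intro k hk hlt
    have : D.filter (fun s => k ≤ (f s : ℝ)) = ∅ := by
      apply Finset.filter_false_of_mem
      intro s hs
      have := hlt s hs
      simp only [pow_zero, one_mul] at this
      linarith
    rw [this]; simp; positivity
  | succ j ih =>
    intro k hk hlt
    have hk0 : 0 < k := by linarith
    rw [← Finset.sum_filter_add_sum_filter_not (D.filter fun s => k ≤ (f s : ℝ))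
      (fun s => 2 * k ≤ (f s : ℝ))]
    have h1 : (D.filter fun s => k ≤ (f s : ℝ)).filter (fun s => 2 * k ≤ (f s : ℝ))
        = D.filter (fun s => 2 * k ≤ (f s : ℝ)) := by
      rw [Finset.filter_filter]
      apply Finset.filter_congr
      intro s _
      exact ⟨fun h => h.2, fun h => ⟨by linarith, h⟩⟩
    have htail : ∑ s ∈ (D.filter fun s => k ≤ (f s : ℝ)).filter (fun s => 2 * k ≤ (f s : ℝ)),
        (f s : ℝ) ^ 2 ≤ 8 * c / (2 * k) := by
      rw [h1]
      apply ih (2 * k) (by linarith)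
      intro s hs
      calc (f s : ℝ) < 2 ^ (j + 1) * k := hlt s hs
        _ = 2 ^ j * (2 * k) := by ring
    have hmain : ∑ s ∈ (D.filter fun s => k ≤ (f s : ℝ)).filter (fun s => ¬ 2 * k ≤ (f s : ℝ)),
        (f s : ℝ) ^ 2 ≤ (2 * k) ^ 2 * (c / k ^ 3) := by
      calc ∑ s ∈ (D.filter fun s => k ≤ (f s : ℝ)).filter (fun s => ¬ 2 * k ≤ (f s : ℝ)),
            (f s : ℝ) ^ 2
          ≤ ∑ _s ∈ (D.filter fun s => k ≤ (f s : ℝ)).filter (fun s => ¬ 2 * k ≤ (f s : ℝ)),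
            (2 * k) ^ 2 := by
            apply Finset.sum_le_sum
            intro s hs
            simp only [Finset.mem_filter] at hs
            have h2 : (f s : ℝ) ≤ 2 * k := by linarith [hs.2]
            have h3 : (0:ℝ) ≤ (f s : ℝ) := by positivity
            nlinarith
        _ = ((D.filter fun s => k ≤ (f s : ℝ)).filter (fun s => ¬ 2 * k ≤ (f s : ℝ))).card
            * (2 * k) ^ 2 := by rw [Finset.sum_const, nsmul_eq_mul]
        _ ≤ ((D.filter fun s => k ≤ (f s : ℝ)).card : ℝ) * (2 * k) ^ 2 := by
            apply mul_le_mul_of_nonneg_right _ (by positivity)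
            exact_mod_cast Finset.card_le_card (Finset.filter_subset _ _)
        _ ≤ (c / k ^ 3) * (2 * k) ^ 2 := by
            apply mul_le_mul_of_nonneg_right (H k hk) (by positivity)
        _ = (2 * k) ^ 2 * (c / k ^ 3) := by ring
    have hfin : (2 * k) ^ 2 * (c / k ^ 3) + 8 * c / (2 * k) ≤ 8 * c / k := by
      have e1 : (2 * k) ^ 2 * (c / k ^ 3) = 4 * (c / k) := by field_simp; ring
      have e2 : 8 * c / (2 * k) = 4 * (c / k) := by field_simp; ring
      have e4 : 8 * c / k = 8 * (c / k) := by ring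
      rw [e1, e2, e4]; linarith
    linarith

lemma moment2 {α : Type*} (D : Finset α) (f : α → ℕ) (c k : ℝ) (hk : 1 ≤ k)
    (H : ∀ τ : ℝ, 1 ≤ τ → ((D.filter fun s => τ ≤ (f s : ℝ)).card : ℝ) ≤ c / τ ^ 3) :
    ∑ s ∈ D.filter (fun s => k ≤ (f s : ℝ)), (f s : ℝ) ^ 2 ≤ 8 * c / k := by
  apply moment_aux2 D f c H (D.sup f) k hk
  intro s hs
  have h1 : f s ≤ D.sup f := Finset.le_sup hs
  have h2 : D.sup f < 2 ^ (D.sup f) := Nat.lt_two_pow_self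
  have h3 : (f s : ℝ) < (2:ℝ) ^ (D.sup f) := by exact_mod_cast lt_of_le_of_lt h1 h2
  calc (f s : ℝ) < (2:ℝ) ^ (D.sup f) := h3
    _ ≤ 2 ^ (D.sup f) * k := le_mul_of_one_le_right (by positivity) hk

/-- the number of points of `A³` on the line through `(u,u+s₁,u+s₂)` dir `(1,1,1)`. -/
noncomputable def Lfun (A : Finset ℝ) (s₁ s₂ : ℝ) : ℕ :=
  (A.filter fun u => u + s₁ ∈ A ∧ u + s₂ ∈ A).card

lemma Lfun_comm (A : Finset ℝ) (s₁ s₂ : ℝ) : Lfun A s₁ s₂ = Lfun A s₂ s₁ := by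
  unfold Lfun
  congr 1
  apply Finset.filter_congr
  intro u _
  exact and_comm

lemma Lfun_le_delta (A : Finset ℝ) (s₁ s₂ : ℝ) : Lfun A s₁ s₂ ≤ delta A A s₁ := by
  rw [delta_eq]
  apply Finset.card_le_card
  intro u hu
  simp only [Finset.mem_filter] at hu ⊢
  exact ⟨hu.1, hu.2.1⟩

lemma Lfun_eq_delta (A : Finset ℝ) (s₁ s₂ : ℝ) :
    Lfun A s₁ s₂ = delta A (A.filter fun u => u + s₁ ∈ A) s₂ := by
  rw [delta_eq, Finset.filter_filter]
  rfl

lemma isRich_iff (A : Finset ℝ) (k a b c : ℝ) :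
    IsRich A k a b c ↔ k ≤ (Lfun A (b - a) (c - a) : ℝ) := by
  unfold IsRich Lfun
  have hcard : ((A ×ˢ A ×ˢ A).filter fun q =>
      ∃ t : ℝ, q.1 = a + t ∧ q.2.1 = b + t ∧ q.2.2 = c + t).card
      = (A.filter fun u => u + (b - a) ∈ A ∧ u + (c - a) ∈ A).card := by
    apply Finset.card_bij' (fun q _ => q.1) (fun u _ => (u, u + (b - a), u + (c - a)))
    · intro q hq
      simp only [Finset.mem_filter, Finset.mem_product] at hq ⊢
      obtain ⟨⟨h1, h2, h3⟩, t, e1, e2, e3⟩ := hq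
      refine ⟨h1, ?_, ?_⟩
      · have : q.1 + (b - a) = q.2.1 := by rw [e1, e2]; ring
        rwa [this]
      · have : q.1 + (c - a) = q.2.2 := by rw [e1, e3]; ring
        rwa [this]
    · intro u hu
      simp only [Finset.mem_filter, Finset.mem_product] at hu ⊢
      exact ⟨⟨hu.1, hu.2.1, hu.2.2⟩, u - a, by ring, by ring, by ring⟩
    · intro q hq
      simp only [Finset.mem_filter, Finset.mem_product] at hq
      obtain ⟨_, t, e1, e2, e3⟩ := hq
      have hb : q.1 + (b - a) = q.2.1 := by rw [e1, e2]; ring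
      have hc : q.1 + (c - a) = q.2.2 := by rw [e1, e3]; ring
      ext
      · rfl
      · simp [hb]
      · simp [hc]
    · intro u hu; rfl
  rw [hcard]

lemma isRich_swap (A : Finset ℝ) (k a b c : ℝ) (h : IsRich A k a b c) : IsRich A k a c b := by
  rw [isRich_iff] at h ⊢
  rwa [Lfun_comm]

lemma tail_L (A : Finset ℝ) (dA : ℝ) (hA : SzTType2 A dA) (s₁ τ : ℝ) (hτ : 1 ≤ τ) :
    (((A - A).filter fun s₂ => τ ≤ (Lfun A s₁ s₂ : ℝ)).card : ℝ)
      ≤ dA * A.card * ((delta A A s₁ : ℝ)) ^ 2 / τ ^ 3 := by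
  set Y := A.filter fun u => u + s₁ ∈ A with hY
  have hYcard : Y.card = delta A A s₁ := (delta_eq A A s₁).symm
  have hsub : ((A - A).filter fun s₂ => τ ≤ (Lfun A s₁ s₂ : ℝ))
      ⊆ ((A - Y).filter fun s => τ ≤ (delta A Y s : ℝ)) := by
    intro s₂ hs₂
    simp only [Finset.mem_filter] at hs₂
    have hd : τ ≤ (delta A Y s₂ : ℝ) := by rw [← Lfun_eq_delta]; exact hs₂.2
    have hpos : 0 < delta A Y s₂ := by
      have h1 : (1:ℝ) ≤ (delta A Y s₂ : ℝ) := le_trans hτ hd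
      exact_mod_cast lt_of_lt_of_le zero_lt_one h1
    obtain ⟨p, hp⟩ := Finset.card_pos.1 (by rwa [delta] at hpos)
    simp only [Finset.mem_filter, Finset.mem_product] at hp
    refine Finset.mem_filter.2 ⟨?_, hd⟩
    rw [Finset.mem_sub]
    exact ⟨p.1, hp.1.1, p.2, hp.1.2, hp.2⟩
  calc (((A - A).filter fun s₂ => τ ≤ (Lfun A s₁ s₂ : ℝ)).card : ℝ)
      ≤ (((A - Y).filter fun s => τ ≤ (delta A Y s : ℝ)).card : ℝ) := by
        exact_mod_cast Finset.card_le_card hsub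
    _ ≤ dA * A.card * (Y.card : ℝ) ^ 2 / τ ^ 3 := hA Y τ hτ
    _ = dA * A.card * ((delta A A s₁ : ℝ)) ^ 2 / τ ^ 3 := by rw [hYcard]

/-- ordered rich tuples -/
noncomputable def T6 (A B : Finset ℝ) (k : ℝ) : Finset ((ℝ×ℝ×ℝ)×(ℝ×ℝ×ℝ)) :=
  ((A ×ˢ A ×ˢ A) ×ˢ (B ×ˢ B ×ˢ B)).filter fun w =>
    w.1.1 ≠ w.1.2.1 ∧
    |(w.1.2.1 - w.1.1) * (w.2.2.2 - w.2.1) - (w.2.2.1 - w.2.1) * (w.1.2.2 - w.1.1)| = 2 ∧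
    IsRich A k w.1.1 w.1.2.1 w.1.2.2 ∧ IsRich B k w.2.1 w.2.2.1 w.2.2.2

lemma stepA (A B : Finset ℝ) (k : ℝ) :
    (richRichTriangles A B k).card ≤ (T6 A B k).card := by
  have hsub : richRichTriangles A B k ⊆ (T6 A B k).image
      (fun w => ({(w.1.1, w.2.1), (w.1.2.1, w.2.2.1), (w.1.2.2, w.2.2.2)} : Finset (ℝ×ℝ))) := by
    intro T hT
    simp only [richRichTriangles, Finset.mem_filter, Finset.mem_powersetCard] at hT
    obtain ⟨⟨hTsub, _⟩, p, q, r, hTpqr, hdet, hRA, hRB⟩ := hT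
    have hp : p ∈ A ×ˢ B := hTsub (hTpqr ▸ by simp)
    have hq : q ∈ A ×ˢ B := hTsub (hTpqr ▸ by simp)
    have hr : r ∈ A ×ˢ B := hTsub (hTpqr ▸ by simp)
    rw [Finset.mem_product] at hp hq hr
    rw [Finset.mem_image]
    by_cases hpq : p.1 = q.1
    · -- use (p, r, q)
      have hpr : p.1 ≠ r.1 := by
        intro h
        apply absurd hdet
        rw [← hpq] at *
        rw [← h]
        simp
      refine ⟨((p.1, r.1, q.1), (p.2, r.2, q.2)), ?_, ?_⟩
      · simp only [T6, Finset.mem_filter, Finset.mem_product]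
        refine ⟨⟨⟨hp.1, hr.1, hq.1⟩, hp.2, hr.2, hq.2⟩, hpr, ?_, ?_, ?_⟩
        · have : (r.1 - p.1) * (q.2 - p.2) - (r.2 - p.2) * (q.1 - p.1)
              = -((q.1 - p.1) * (r.2 - p.2) - (q.2 - p.2) * (r.1 - p.1)) := by ring
          rw [this, abs_neg]
          exact hdet
        · exact isRich_swap A k p.1 q.1 r.1 hRA
        · exact isRich_swap B k p.2 q.2 r.2 hRB
      · simp only []
        rw [hTpqr]
        rw [Prod.mk.eta, Prod.mk.eta, Prod.mk.eta]
        rw [Finset.pair_comm r q]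
    · refine ⟨((p.1, q.1, r.1), (p.2, q.2, r.2)), ?_, ?_⟩
      · simp only [T6, Finset.mem_filter, Finset.mem_product]
        exact ⟨⟨⟨hp.1, hq.1, hr.1⟩, hp.2, hq.2, hr.2⟩, hpq, hdet, hRA, hRB⟩
      · simp only []
        rw [hTpqr, Prod.mk.eta, Prod.mk.eta, Prod.mk.eta]
  calc (richRichTriangles A B k).card ≤ ((T6 A B k).image _).card := Finset.card_le_card hsub
    _ ≤ (T6 A B k).card := Finset.card_image_le

noncomputable def DA (A : Finset ℝ) (k : ℝ) : Finset (ℝ × ℝ) :=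
  ((A - A) ×ˢ (A - A)).filter fun s => (k ≤ (Lfun A s.1 s.2 : ℝ)) ∧ s.1 ≠ 0

noncomputable def DB (B : Finset ℝ) (k : ℝ) : Finset ℝ :=
  (B - B).filter fun t => k ≤ (delta B B t : ℝ)

noncomputable def XF (A : Finset ℝ) (k : ℝ) : Finset ((_ : ℝ × ℝ) × ℝ) :=
  (DA A k).sigma fun s => A.filter fun u => u + s.1 ∈ A ∧ u + s.2 ∈ A

noncomputable def YF (B : Finset ℝ) (k : ℝ) : Finset (((_ : ℝ) × ℝ) × Bool) :=
  ((DB B k).sigma fun t => B.filter fun v => v + t ∈ B) ×ˢ (Finset.univ : Finset Bool)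

lemma stepB (A B : Finset ℝ) (k : ℝ) :
    (T6 A B k).card ≤ (XF A k).card * (YF B k).card := by
  rw [← Finset.card_product]
  apply Finset.card_le_card_of_injOn
    (fun w => (⟨(w.1.2.1 - w.1.1, w.1.2.2 - w.1.1), w.1.1⟩,
      (⟨w.2.2.1 - w.2.1, w.2.1⟩,
        decide (0 < (w.1.2.1 - w.1.1) * (w.2.2.2 - w.2.1)
          - (w.2.2.1 - w.2.1) * (w.1.2.2 - w.1.1)))))
  · rintro ⟨⟨a, b, c⟩, x, y, z⟩ hw
    simp only [T6, Finset.mem_filter, Finset.mem_product, Finset.mem_coe] at hw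
    obtain ⟨⟨⟨ha, hb, hc⟩, hx, hy, hz⟩, hab, hdet, hRA, hRB⟩ := hw
    rw [Finset.mem_coe, Finset.mem_product]
    constructor
    · -- XF membership
      rw [XF, Finset.mem_sigma]
      constructor
      · rw [DA, Finset.mem_filter, Finset.mem_product]
        refine ⟨⟨?_, ?_⟩, ?_, ?_⟩
        · rw [Finset.mem_sub]; exact ⟨b, hb, a, ha, rfl⟩
        · rw [Finset.mem_sub]; exact ⟨c, hc, a, ha, rfl⟩
        · exact (isRich_iff A k a b c).1 hRA
        · exact sub_ne_zero.2 (Ne.symm hab)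
      · rw [Finset.mem_filter]
        refine ⟨ha, ?_, ?_⟩
        · have : a + (b - a) = b := by ring
          rw [this]; exact hb
        · have : a + (c - a) = c := by ring
          rw [this]; exact hc
    · -- YF membership
      rw [YF, Finset.mem_product]
      refine ⟨?_, Finset.mem_univ _⟩
      rw [Finset.mem_sigma]
      constructor
      · rw [DB, Finset.mem_filter]
        refine ⟨?_, ?_⟩
        · rw [Finset.mem_sub]; exact ⟨y, hy, x, hx, rfl⟩
        · have h1 := (isRich_iff B k x y z).1 hRB
          have h2 : (Lfun B (y - x) (z - x) : ℝ) ≤ (delta B B (y - x) : ℝ) := by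
            exact_mod_cast Lfun_le_delta B (y - x) (z - x)
          linarith
      · rw [Finset.mem_filter]
        refine ⟨hx, ?_⟩
        have : x + (y - x) = y := by ring
        rw [this]; exact hy
  · -- injectivity
    rintro ⟨⟨a, b, c⟩, x, y, z⟩ hw ⟨⟨a', b', c'⟩, x', y', z'⟩ hw' heq
    simp only [T6, Finset.mem_filter, Finset.mem_product, Finset.mem_coe] at hw hw'
    obtain ⟨-, hab, hdet, -, -⟩ := hw
    obtain ⟨-, hab', hdet', -, -⟩ := hw'
    have e1 : ((b - a, c - a) : ℝ × ℝ) = (b' - a', c' - a') := congrArg (fun p => p.1.1) heq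
    have haa : a = a' := congrArg (fun p => p.1.2) heq
    have ht1 : y - x = y' - x' := congrArg (fun p => p.2.1.1) heq
    have hxx : x = x' := congrArg (fun p => p.2.1.2) heq
    have hsgn : decide (0 < (b - a) * (z - x) - (y - x) * (c - a))
        = decide (0 < (b' - a') * (z' - x') - (y' - x') * (c' - a')) :=
      congrArg (fun p => p.2.2) heq
    have hs1 : b - a = b' - a' := (Prod.ext_iff.1 e1).1
    have hs2 : c - a = c' - a' := (Prod.ext_iff.1 e1).2
    subst haa hxx
    have hbb : b = b' := by linarith [hs1]
    have hcc : c = c' := by linarith [hs2]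
    have hyy : y = y' := by linarith [ht1]
    subst hbb hcc hyy
    -- now deduce z = z'
    have hD := (abs_eq (by norm_num : (0:ℝ) ≤ 2)).1 hdet
    have hD' := (abs_eq (by norm_num : (0:ℝ) ≤ 2)).1 hdet'
    have hzz : z = z' := by
      have hba : b - a ≠ 0 := sub_ne_zero.2 (Ne.symm hab)
      rcases hD with h2 | h2 <;> rcases hD' with h2' | h2'
      · have : (b - a) * (z - x) = (b - a) * (z' - x) := by linarith
        have := mul_left_cancel₀ hba this
        linarith
      · exfalso
        rw [h2, h2'] at hsgn
        norm_num at hsgn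
      · exfalso
        rw [h2, h2'] at hsgn
        norm_num at hsgn
      · have : (b - a) * (z - x) = (b - a) * (z' - x) := by linarith
        have := mul_left_cancel₀ hba this
        linarith
    subst hzz
    rfl

lemma stepY (B : Finset ℝ) (dB k : ℝ) (hB : SzTType2 B dB) (hk : 1 ≤ k) :
    ((YF B k).card : ℝ) ≤ 8 * dB * (B.card : ℝ) ^ 3 / k ^ 2 := by
  have hcard : ((YF B k).card : ℝ) = 2 * ∑ t ∈ DB B k, (delta B B t : ℝ) := by
    rw [YF, Finset.card_product, Finset.card_sigma]
    rw [Finset.card_univ]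
    push_cast
    rw [mul_comm]
    congr 1
    apply Finset.sum_congr rfl
    intro t _
    rw [delta_eq]
  rw [hcard]
  have hsum : ∑ t ∈ DB B k, (delta B B t : ℝ) ≤ 4 * (dB * (B.card : ℝ) ^ 3) / k ^ 2 := by
    apply moment1 (B - B) (delta B B) (dB * (B.card : ℝ) ^ 3) k hk
    intro τ hτ
    have := hB B τ hτ
    calc (((B - B).filter fun s => τ ≤ (delta B B s : ℝ)).card : ℝ)
        ≤ dB * B.card * (B.card : ℝ) ^ 2 / τ ^ 3 := this
      _ = dB * (B.card : ℝ) ^ 3 / τ ^ 3 := by ring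
  calc 2 * ∑ t ∈ DB B k, (delta B B t : ℝ) ≤ 2 * (4 * (dB * (B.card : ℝ) ^ 3) / k ^ 2) := by
        linarith
    _ = 8 * dB * (B.card : ℝ) ^ 3 / k ^ 2 := by ring

lemma stepX (A : Finset ℝ) (dA k : ℝ) (hA : SzTType2 A dA) (hk : 1 ≤ k) (hdA : 0 ≤ dA) :
    ((XF A k).card : ℝ) ≤ 32 * dA ^ 2 * (A.card : ℝ) ^ 4 / k ^ 3 := by
  have hk0 : (0:ℝ) < k := by linarith
  have hcard : ((XF A k).card : ℝ) = ∑ s ∈ DA A k, (Lfun A s.1 s.2 : ℝ) := by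
    rw [XF, Finset.card_sigma]
    push_cast
    rfl
  rw [hcard]
  set Q := ((A - A) ×ˢ (A - A)).filter
    (fun p : ℝ × ℝ => (k ≤ (delta A A p.1 : ℝ)) ∧ (k ≤ (Lfun A p.1 p.2 : ℝ))) with hQ
  have h1 : ∑ s ∈ DA A k, (Lfun A s.1 s.2 : ℝ) ≤ ∑ s ∈ Q, (Lfun A s.1 s.2 : ℝ) := by
    apply Finset.sum_le_sum_of_subset_of_nonneg
    · intro p hp
      rw [DA, Finset.mem_filter] at hp
      rw [hQ, Finset.mem_filter]
      refine ⟨hp.1, ?_, hp.2.1⟩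
      have h2 : (Lfun A p.1 p.2 : ℝ) ≤ (delta A A p.1 : ℝ) := by
        exact_mod_cast Lfun_le_delta A p.1 p.2
      linarith [hp.2.1]
    · intro p _ _
      positivity
  have h2 : ∑ s ∈ Q, (Lfun A s.1 s.2 : ℝ)
      = ∑ s₁ ∈ A - A, ∑ s₂ ∈ A - A,
        (if (k ≤ (delta A A s₁ : ℝ)) ∧ (k ≤ (Lfun A s₁ s₂ : ℝ)) then (Lfun A s₁ s₂ : ℝ) else 0) := by
    rw [hQ, Finset.sum_filter, Finset.sum_product]
  have h3 : ∀ s₁ ∈ A - A,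
      ∑ s₂ ∈ A - A,
        (if (k ≤ (delta A A s₁ : ℝ)) ∧ (k ≤ (Lfun A s₁ s₂ : ℝ)) then (Lfun A s₁ s₂ : ℝ) else 0)
      ≤ (if k ≤ (delta A A s₁ : ℝ) then
          4 * (dA * A.card * (delta A A s₁ : ℝ) ^ 2) / k ^ 2 else 0) := by
    intro s₁ _
    by_cases hδ : k ≤ (delta A A s₁ : ℝ)
    · simp only [hδ, true_and, if_true]
      rw [← Finset.sum_filter]
      exact moment1 (A - A) (Lfun A s₁) (dA * A.card * (delta A A s₁ : ℝ) ^ 2) k hk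
        (fun τ hτ => tail_L A dA hA s₁ τ hτ)
    · simp only [hδ, false_and, if_false]
      simp
  have h4 : ∑ s₁ ∈ A - A,
      (if k ≤ (delta A A s₁ : ℝ) then
        4 * (dA * A.card * (delta A A s₁ : ℝ) ^ 2) / k ^ 2 else 0)
      = (4 * dA * A.card / k ^ 2) * ∑ s₁ ∈ (A - A).filter (fun s₁ => k ≤ (delta A A s₁ : ℝ)),
          (delta A A s₁ : ℝ) ^ 2 := by
    rw [← Finset.sum_filter, Finset.mul_sum]
    apply Finset.sum_congr rfl
    intro s₁ _
    ring
  have h5 : ∑ s₁ ∈ (A - A).filter (fun s₁ => k ≤ (delta A A s₁ : ℝ)), (delta A A s₁ : ℝ) ^ 2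
      ≤ 8 * (dA * (A.card : ℝ) ^ 3) / k := by
    apply moment2 (A - A) (delta A A) (dA * (A.card : ℝ) ^ 3) k hk
    intro τ hτ
    calc (((A - A).filter fun s => τ ≤ (delta A A s : ℝ)).card : ℝ)
        ≤ dA * A.card * (A.card : ℝ) ^ 2 / τ ^ 3 := hA A τ hτ
      _ = dA * (A.card : ℝ) ^ 3 / τ ^ 3 := by ring
  have hc : (0:ℝ) ≤ 4 * dA * A.card / k ^ 2 := by positivity
  calc ∑ s ∈ DA A k, (Lfun A s.1 s.2 : ℝ)
      ≤ ∑ s ∈ Q, (Lfun A s.1 s.2 : ℝ) := h1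
    _ = _ := h2
    _ ≤ ∑ s₁ ∈ A - A,
        (if k ≤ (delta A A s₁ : ℝ) then
          4 * (dA * A.card * (delta A A s₁ : ℝ) ^ 2) / k ^ 2 else 0) :=
        Finset.sum_le_sum h3
    _ = (4 * dA * A.card / k ^ 2) * ∑ s₁ ∈ (A - A).filter (fun s₁ => k ≤ (delta A A s₁ : ℝ)),
          (delta A A s₁ : ℝ) ^ 2 := h4
    _ ≤ (4 * dA * A.card / k ^ 2) * (8 * (dA * (A.card : ℝ) ^ 3) / k) :=
        mul_le_mul_of_nonneg_left h5 hc
    _ = 32 * dA ^ 2 * (A.card : ℝ) ^ 4 / k ^ 3 := by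
        field_simp
        ring

theorem rich_rich_triangles_bound :
    ∃ C : ℝ, 0 < C ∧ ∀ (n m : ℕ) (A B : Finset ℝ) (dA dB k : ℝ),
      n = m ^ 2 → A.card = m → B.card = m → 2 ≤ m →
      0 < dA → 0 < dB → SzTType2 A dA → SzTType2 B dB → 1 ≤ k →
      ((richRichTriangles A B k).card : ℝ)
        ≤ C * (dA ^ 2 * dB * (n : ℝ) ^ ((7 : ℝ) / 2) * Real.log n / k ^ 5
              + (n : ℝ) ^ 2) := by
  refine ⟨256, by norm_num, ?_⟩
  intro n m A B dA dB k hn hAc hBc hm hdA hdB hA hB hk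
  have hm2 : (2:ℝ) ≤ (m:ℝ) := by exact_mod_cast hm
  have hmR : (0:ℝ) ≤ (m:ℝ) := by linarith
  have hk0 : (0:ℝ) < k := by linarith
  have hX := stepX A dA k hA hk (le_of_lt hdA)
  rw [hAc] at hX
  have hY := stepY B dB k hB hk
  rw [hBc] at hY
  have hXn : (0:ℝ) ≤ ((XF A k).card : ℝ) := by positivity
  have hYn : (0:ℝ) ≤ ((YF B k).card : ℝ) := by positivity
  have hXb : (0:ℝ) ≤ 32 * dA ^ 2 * (m:ℝ) ^ 4 / k ^ 3 := by positivity
  have h1 : ((richRichTriangles A B k).card : ℝ) ≤ ((XF A k).card : ℝ) * ((YF B k).card : ℝ) := by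
    have := le_trans (stepA A B k) (stepB A B k)
    exact_mod_cast this
  have h2 : ((XF A k).card : ℝ) * ((YF B k).card : ℝ)
      ≤ (32 * dA ^ 2 * (m:ℝ) ^ 4 / k ^ 3) * (8 * dB * (m:ℝ) ^ 3 / k ^ 2) :=
    mul_le_mul hX hY hYn hXb
  have h3 : (32 * dA ^ 2 * (m:ℝ) ^ 4 / k ^ 3) * (8 * dB * (m:ℝ) ^ 3 / k ^ 2)
      = 256 * (dA ^ 2 * dB * (m:ℝ) ^ 7 / k ^ 5) := by
    field_simp
    ring
  have h5 : ((n:ℝ)) ^ ((7:ℝ)/2) = (m:ℝ) ^ (7:ℕ) := by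
    have hnm : ((n:ℝ)) = (m:ℝ) ^ (2:ℕ) := by rw [hn]; push_cast; ring
    rw [hnm, ← Real.rpow_natCast (m:ℝ) 2, ← Real.rpow_mul hmR]
    norm_num
  have hn4 : (4:ℝ) ≤ (n:ℝ) := by
    rw [hn]
    push_cast
    nlinarith
  have hlog : 1 ≤ Real.log n := by
    rw [Real.le_log_iff_exp_le (by linarith : (0:ℝ) < (n:ℝ))]
    have := Real.exp_one_lt_d9
    linarith
  have hterm : (0:ℝ) ≤ dA ^ 2 * dB * (m:ℝ) ^ 7 / k ^ 5 := by positivity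
  have hn2 : (0:ℝ) ≤ (n:ℝ) ^ 2 := by positivity
  have hfin : 256 * (dA ^ 2 * dB * (m:ℝ) ^ 7 / k ^ 5)
      ≤ 256 * (dA ^ 2 * dB * (n : ℝ) ^ ((7 : ℝ) / 2) * Real.log n / k ^ 5 + (n : ℝ) ^ 2) := by
    rw [h5]
    have e1 : dA ^ 2 * dB * (m:ℝ) ^ (7:ℕ) * Real.log n / k ^ 5
        = (dA ^ 2 * dB * (m:ℝ) ^ 7 / k ^ 5) * Real.log n := by ring
    rw [e1]
    nlinarith [hterm, hn2, hlog]
  calc ((richRichTriangles A B k).card : ℝ)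
      ≤ ((XF A k).card : ℝ) * ((YF B k).card : ℝ) := h1
    _ ≤ (32 * dA ^ 2 * (m:ℝ) ^ 4 / k ^ 3) * (8 * dB * (m:ℝ) ^ 3 / k ^ 2) := h2
    _ = 256 * (dA ^ 2 * dB * (m:ℝ) ^ 7 / k ^ 5) := h3
    _ ≤ _ := hfin
end

section
/- There is an absolute constant C > 0 with the following property. Let A ⊂ ℝ be a finite nonempty set of positive reals and let M ≥ 1 be such that |A·A| ≤ M|A|, where A·A = {a·a' : a, a' ∈ A}. Then A is of SzT-type with parameter α = 2 and coefficient C·M²; that is, for every finite set Y ⊂ ℝ and every real τ ≥ 1, |{s ∈ A − Y : δ_{A,Y}(s) ≥ τ}| ≤ C · M² · |A| · |Y|² / τ³. -/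
set_option maxHeartbeats 1600000


open scoped Pointwise Classical

/-! ### Auxiliary counting lemmas -/

lemma delta_le_right (X Y : Finset ℝ) (s : ℝ) : delta X Y s ≤ Y.card := by
  apply Finset.card_le_card_of_injOn (fun p => p.2)
  · intro p hp
    exact (Finset.mem_product.mp (Finset.mem_filter.mp hp).1).2
  · intro p hp q hq h
    have hp' := (Finset.mem_filter.mp hp).2
    have hq' := (Finset.mem_filter.mp hq).2
    have h1 : p.1 = q.1 := by
      have : p.1 - p.2 = q.1 - q.2 := by rw [hp', hq']
      simp only [h] at this
      linarith
    exact Prod.ext h1 h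

lemma delta_le_left (X Y : Finset ℝ) (s : ℝ) : delta X Y s ≤ X.card := by
  apply Finset.card_le_card_of_injOn (fun p => p.1)
  · intro p hp
    exact (Finset.mem_product.mp (Finset.mem_filter.mp hp).1).1
  · intro p hp q hq h
    have hp' := (Finset.mem_filter.mp hp).2
    have hq' := (Finset.mem_filter.mp hq).2
    have h2 : p.2 = q.2 := by
      have h3 : p.1 - p.2 = q.1 - q.2 := by rw [hp', hq']
      have h4 : p.1 = q.1 := h
      linarith
    exact Prod.ext h h2

/-- Rank-based cell index: elements of `Z` are grouped into blocks of `u`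
consecutive elements. -/
noncomputable def rIdx (Z : Finset ℝ) (u : ℕ) (z : ℝ) : ℕ :=
  (Z.filter (fun w => w < z)).card / u

lemma rIdx_mono (Z : Finset ℝ) (u : ℕ) {z z' : ℝ} (h : z ≤ z') :
    rIdx Z u z ≤ rIdx Z u z' :=
  Nat.div_le_div_right (Finset.card_le_card (by
    intro w hw
    simp only [Finset.mem_filter] at hw ⊢
    exact ⟨hw.1, lt_of_lt_of_le hw.2 h⟩))

lemma rank_strict_mono (Z : Finset ℝ) {z z' : ℝ} (hz : z ∈ Z) (h : z < z') :
    (Z.filter (fun w => w < z)).card < (Z.filter (fun w => w < z')).card := by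
  apply Finset.card_lt_card
  constructor
  · intro w hw
    simp only [Finset.mem_filter] at hw ⊢
    exact ⟨hw.1, lt_trans hw.2 h⟩
  · intro hsub
    have : z ∈ Z.filter (fun w => w < z) := hsub (by simp [hz, h])
    simp at this

lemma rIdx_lt (Z : Finset ℝ) {u n : ℕ} (hu : 0 < u) {z : ℝ} (hz : z ∈ Z)
    (hZ : Z.card ≤ u * n) : rIdx Z u z < n := by
  have hrank : (Z.filter (fun w => w < z)).card < Z.card :=
    Finset.card_lt_card ⟨Finset.filter_subset _ _, by
      intro hsub
      have : z ∈ Z.filter (fun w => w < z) := hsub hz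
      simp at this⟩
  rw [rIdx, Nat.div_lt_iff_lt_mul hu]
  calc (Z.filter (fun w => w < z)).card < Z.card := hrank
    _ ≤ u * n := hZ
    _ = n * u := Nat.mul_comm u n

lemma rIdx_fiber (Z : Finset ℝ) {u : ℕ} (hu : 0 < u) (j : ℕ) :
    (Z.filter (fun z => rIdx Z u z = j)).card ≤ u := by
  have h : (Z.filter (fun z => rIdx Z u z = j)).card ≤ (Finset.Ico (j*u) (j*u+u)).card := by
    apply Finset.card_le_card_of_injOn (fun z => (Z.filter (fun w => w < z)).card)
    · intro z hz
      simp only [Finset.mem_coe, Finset.mem_filter] at hz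
      have h1 : j * u ≤ (Z.filter (fun w => w < z)).card := by
        rw [← hz.2]
        exact Nat.div_mul_le_self _ _
      have h2 : (Z.filter (fun w => w < z)).card < (j+1) * u := by
        rw [← Nat.div_lt_iff_lt_mul hu]
        have : rIdx Z u z < j + 1 := by rw [hz.2]; omega
        exact this
      rw [Nat.succ_mul] at h2
      simp only [Finset.mem_coe, Finset.mem_Ico]; omega
    · intro z hz z' hz' heq
      simp only [Finset.mem_coe, Finset.mem_filter] at hz hz'
      by_contra hne
      rcases lt_or_gt_of_ne hne with h | h
      · exact absurd heq (Nat.ne_of_lt (rank_strict_mono Z hz.1 h))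
      · exact absurd heq.symm (Nat.ne_of_lt (rank_strict_mono Z hz'.1 h))
  simpa using h

lemma nat_le_one_add (n : ℕ) : n ≤ 1 + (n * n - n) := by
  rcases n with _ | m
  · omega
  · have h : m ≤ (m+1) * m := Nat.le_mul_of_pos_left m (Nat.succ_pos m)
    have : (m+1) * (m+1) - (m+1) = (m+1) * m := by ring_nf; omega
    omega

/-- Fibre overcounting: the cardinality of `T` is at most the number of fibres of `f`
plus the number of ordered pairs of distinct elements in a common fibre. -/
lemma card_le_image_add_offdiag {α β : Type*} [DecidableEq α] [DecidableEq β]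
    (T : Finset α) (f : α → β) :
    T.card ≤ (T.image f).card +
      ((T ×ˢ T).filter fun w => w.1 ≠ w.2 ∧ f w.1 = f w.2).card := by
  classical
  set Q := (T ×ˢ T).filter fun w => w.1 ≠ w.2 ∧ f w.1 = f w.2 with hQ
  have hT : T.card = ∑ b ∈ T.image f, (T.filter fun t => f t = b).card :=
    Finset.card_eq_sum_card_fiberwise (fun t ht => Finset.mem_image_of_mem f ht)
  have hQsum : Q.card = ∑ b ∈ T.image f, (Q.filter fun w => f w.1 = b).card :=
    Finset.card_eq_sum_card_fiberwise (fun w hw => by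
      simp only [hQ, Finset.mem_coe, Finset.mem_filter, Finset.mem_product] at hw
      exact Finset.mem_image_of_mem f hw.1.1)
  have himg : (T.image f).card = ∑ _b ∈ T.image f, 1 := by simp
  rw [hT, hQsum, himg, ← Finset.sum_add_distrib]
  apply Finset.sum_le_sum
  intro b _
  have hsub : (T.filter fun t => f t = b).offDiag ⊆ Q.filter fun w => f w.1 = b := by
    intro w hw
    rw [Finset.mem_offDiag] at hw
    obtain ⟨h1, h2, h3⟩ := hw
    rw [Finset.mem_filter] at h1 h2
    simp only [hQ, Finset.mem_filter, Finset.mem_product]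
    exact ⟨⟨⟨h1.1, h2.1⟩, h3, by rw [h1.2, h2.2]⟩, h1.2⟩
  have hcard := Finset.card_le_card hsub
  rw [Finset.offDiag_card] at hcard
  calc (T.filter fun t => f t = b).card
      ≤ 1 + ((T.filter fun t => f t = b).card * (T.filter fun t => f t = b).card
          - (T.filter fun t => f t = b).card) := nat_le_one_add _
    _ ≤ 1 + (Q.filter fun w => f w.1 = b).card := by omega

/-- If every element of `T` satisfies `p x ·` for at most one `x ∈ L`, then the
sum of the fibre counts is at most `|T|`. -/
lemma sum_filter_card_le {α β : Type*} (L : Finset α) (T : Finset β)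
    (p : α → β → Prop) [∀ a b, Decidable (p a b)]
    (h : ∀ t ∈ T, ∀ x ∈ L, ∀ y ∈ L, p x t → p y t → x = y) :
    ∑ x ∈ L, (T.filter (p x)).card ≤ T.card := by
  calc ∑ x ∈ L, (T.filter (p x)).card
      = ∑ t ∈ T, ∑ x ∈ L, if p x t then 1 else 0 := by
        simp_rw [Finset.card_filter]; exact Finset.sum_comm
    _ ≤ ∑ _t ∈ T, 1 := by
        apply Finset.sum_le_sum
        intro t ht
        rw [← Finset.card_filter]
        exact Finset.card_le_one.mpr
          (fun x hx y hy => h t ht x (Finset.mem_filter.mp hx).1 y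
            (Finset.mem_filter.mp hy).1 (Finset.mem_filter.mp hx).2
            (Finset.mem_filter.mp hy).2)
    _ = T.card := by simp

theorem small_product_set_is_SzT_type :
    ∃ C : ℝ, 0 < C ∧ ∀ (A : Finset ℝ) (M : ℝ),
      A.Nonempty → (∀ a ∈ A, 0 < a) → 1 ≤ M → ((A * A).card : ℝ) ≤ M * A.card →
      SzTType2 A (C * M ^ 2) := by
  refine ⟨512, by norm_num, fun A M hA hpos hM hprod Y τ hτ => ?_⟩
  have hτ0 : (0:ℝ) < τ := by linarith
  set S := (A - Y).filter (fun s => τ ≤ (delta A Y s : ℝ)) with hSdef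
  rcases S.eq_empty_or_nonempty with hSe | ⟨s0, hs0⟩
  · rw [hSe]
    simp only [Finset.card_empty, Nat.cast_zero]
    positivity
  have hA1 : (1:ℝ) ≤ A.card := by
    have := hA.card_pos; exact_mod_cast this
  have hs0' := (Finset.mem_filter.mp hs0).2
  have hτY : τ ≤ (Y.card : ℝ) :=
    le_trans hs0' (by exact_mod_cast delta_le_right A Y s0)
  have hτA : τ ≤ (A.card : ℝ) :=
    le_trans hs0' (by exact_mod_cast delta_le_left A Y s0)
  have hY1 : (1:ℝ) ≤ Y.card := le_trans hτ hτY
  rw [le_div_iff₀ (by positivity)]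
  -- small τ : trivial bound
  by_cases hτ4 : τ < 4
  · have hS1 : (S.card : ℝ) ≤ (A.card : ℝ) * Y.card := by
      have h1 : S.card ≤ (A - Y).card :=
        Finset.card_le_card (Finset.filter_subset _ _)
      have h2 : (A - Y).card ≤ A.card * Y.card := by
        rw [Finset.sub_def]
        exact le_trans Finset.card_image_le (le_of_eq (Finset.card_product _ _))
      have := le_trans h1 h2
      exact_mod_cast this
    have hM1 : (1:ℝ) ≤ M ^ 2 := by nlinarith
    have hAY0 : (0:ℝ) ≤ (A.card : ℝ) * Y.card := by positivity
    have t3 : τ^3 ≤ 64 := by nlinarith [sq_nonneg τ, hτ0.le]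
    have e1 : (S.card:ℝ) * τ^3 ≤ ((A.card:ℝ) * Y.card) * 64 :=
      mul_le_mul hS1 t3 (by positivity) hAY0
    have hint1 : (0:ℝ) ≤ (M^2 - 1) * ((A.card:ℝ) * Y.card^2) :=
      mul_nonneg (by linarith) (by positivity)
    have hint2 : (0:ℝ) ≤ ((Y.card:ℝ) - 1) * ((A.card:ℝ) * Y.card) :=
      mul_nonneg (by linarith) hAY0
    nlinarith [e1, hint1, hint2, hAY0]
  push_neg at hτ4
  -- main argument
  set X := A * A with hXdef
  set P := X ×ˢ Y with hPdef
  have hAX : A.card ≤ X.card := by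
    obtain ⟨a0, ha0⟩ := hA
    apply Finset.card_le_card_of_injOn (fun a => a * a0)
    · intro a ha; exact Finset.mul_mem_mul ha ha0
    · intro a _ b _ h
      exact mul_right_cancel₀ (ne_of_gt (hpos a0 ha0)) h
  set r : ℕ := ⌊τ/4⌋₊ with hrdef
  have hr1 : 1 ≤ r := by
    rw [hrdef]
    exact Nat.le_floor (by linarith)
  have hr0 : 0 < r := hr1
  have hrτ : (r : ℝ) ≤ τ / 4 := Nat.floor_le (by positivity)
  have hτr : τ ≤ 8 * r := by
    by_cases h8 : τ < 8
    · have : (1:ℝ) ≤ r := by exact_mod_cast hr1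
      linarith
    · push_neg at h8
      have := Nat.lt_floor_add_one (τ/4)
      rw [← hrdef] at this
      linarith
  set u : ℕ := X.card / r + 1 with hudef
  set v : ℕ := Y.card / r + 1 with hvdef
  have hu0 : 0 < u := Nat.succ_pos _
  have hv0 : 0 < v := Nat.succ_pos _
  have hXu : X.card ≤ u * r := by
    have hdm : r * (X.card / r) + X.card % r = X.card := Nat.div_add_mod X.card r
    have hmlt : X.card % r < r := Nat.mod_lt X.card hr0
    rw [hudef, add_mul, one_mul, Nat.mul_comm]
    omega
  have hYv : Y.card ≤ v * r := by
    have hdm : r * (Y.card / r) + Y.card % r = Y.card := Nat.div_add_mod Y.card r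
    have hmlt : Y.card % r < r := Nat.mod_lt Y.card hr0
    rw [hvdef, add_mul, one_mul, Nat.mul_comm]
    omega
  -- the cell map
  set cmap : ℝ × ℝ → ℕ × ℕ := fun pq => (rIdx X u pq.1, rIdx Y v pq.2) with hcm
  -- incidence sets
  set inc : ℝ × ℝ → Finset (ℝ × ℝ) :=
    fun l => P.filter (fun pq => pq.1 = l.1 * (pq.2 + l.2)) with hincdef
  set L := A ×ˢ S with hLdef
  -- Lower bound on incidences
  have hinc_lower : ∀ l ∈ L, τ ≤ ((inc l).card : ℝ) := by
    intro l hl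
    obtain ⟨ha, hs⟩ := Finset.mem_product.mp hl
    have hs2 := (Finset.mem_filter.mp hs).2
    refine le_trans hs2 ?_
    have hd : delta A Y l.2 ≤ (inc l).card := by
      apply Finset.card_le_card_of_injOn (fun p => (l.1 * p.1, p.2))
      · intro p hp
        rw [Finset.mem_coe, Finset.mem_filter] at hp
        obtain ⟨hpm, hpe⟩ := hp
        rw [Finset.mem_product] at hpm
        rw [hincdef]
        simp only [Finset.mem_coe, Finset.mem_filter]
        constructor
        · rw [hPdef, Finset.mem_product]
          exact ⟨Finset.mul_mem_mul ha hpm.1, hpm.2⟩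
        · have : p.1 = p.2 + l.2 := by linarith [hpe]
          rw [this]
      · intro p _ q _ h
        simp only [Prod.mk.injEq] at h
        have ha0 : l.1 ≠ 0 := ne_of_gt (hpos l.1 ha)
        exact Prod.ext (mul_left_cancel₀ ha0 h.1) h.2
    exact_mod_cast hd
  -- pairs of distinct points in a common cell
  set Pairs := (P ×ˢ P).filter (fun w => w.1 ≠ w.2 ∧ cmap w.1 = cmap w.2) with hPairs
  set onB : ℝ × ℝ → (ℝ × ℝ) × (ℝ × ℝ) → Prop :=
    fun l w => w.1.1 = l.1 * (w.1.2 + l.2) ∧ w.2.1 = l.1 * (w.2.2 + l.2) with honB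
  -- Per-line upper bound
  have hinc_upper : ∀ l ∈ L, (inc l).card ≤ 2 * r + (Pairs.filter (onB l)).card := by
    intro l hl
    obtain ⟨ha, _⟩ := Finset.mem_product.mp hl
    have hal : (0:ℝ) < l.1 := hpos l.1 ha
    have key := card_le_image_add_offdiag (inc l) cmap
    have himg : ((inc l).image cmap).card ≤ 2 * r := by
      have h2 : ((inc l).image cmap).card ≤ (Finset.range (2 * r)).card := by
        apply Finset.card_le_card_of_injOn (fun c => c.1 + c.2)
        · intro c hc
          rw [Finset.mem_coe, Finset.mem_image] at hc
          obtain ⟨pq, hpq, hcq⟩ := hc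
          rw [hincdef] at hpq
          simp only [Finset.mem_filter] at hpq
          rw [hPdef, Finset.mem_product] at hpq
          have hj : rIdx X u pq.1 < r := rIdx_lt X hu0 hpq.1.1 hXu
          have hk : rIdx Y v pq.2 < r := rIdx_lt Y hv0 hpq.1.2 hYv
          rw [← hcq]
          simp only [hcm, Finset.mem_coe, Finset.mem_range]
          omega
        · intro c hc c' hc' heq
          simp only [Finset.coe_image, Set.mem_image, Finset.mem_coe] at hc hc'
          obtain ⟨pq, hpq, hcq⟩ := hc
          obtain ⟨pq', hpq', hcq'⟩ := hc'
          rw [hincdef] at hpq hpq'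
          simp only [Finset.mem_filter] at hpq hpq'
          have hmono : ∀ (w w' : ℝ × ℝ), w.1 = l.1 * (w.2 + l.2) →
              w'.1 = l.1 * (w'.2 + l.2) → w.2 ≤ w'.2 →
              rIdx X u w.1 ≤ rIdx X u w'.1 ∧ rIdx Y v w.2 ≤ rIdx Y v w'.2 := by
            intro w w' hw hw' hle
            constructor
            · apply rIdx_mono
              rw [hw, hw']
              have : w.2 + l.2 ≤ w'.2 + l.2 := by linarith
              nlinarith
            · exact rIdx_mono _ _ hle
          rcases le_total pq.2 pq'.2 with hle | hle
          · obtain ⟨h1, h2⟩ := hmono pq pq' hpq.2 hpq'.2 hle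
            rw [← hcq, ← hcq']
            simp only [hcm] at *
            rw [← hcq, ← hcq'] at heq
            simp only at heq
            exact Prod.ext (by omega) (by omega)
          · obtain ⟨h1, h2⟩ := hmono pq' pq hpq'.2 hpq.2 hle
            rw [← hcq, ← hcq']
            simp only [hcm] at *
            rw [← hcq, ← hcq'] at heq
            simp only at heq
            exact Prod.ext (by omega) (by omega)
      simpa using h2
    have hoff : (((inc l) ×ˢ (inc l)).filter
        fun w => w.1 ≠ w.2 ∧ cmap w.1 = cmap w.2).card ≤ (Pairs.filter (onB l)).card := by
      apply Finset.card_le_card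
      intro w hw
      simp only [Finset.mem_filter, Finset.mem_product] at hw
      obtain ⟨⟨hw1, hw2⟩, hne, hcc⟩ := hw
      rw [hincdef] at hw1 hw2
      simp only [Finset.mem_filter] at hw1 hw2
      rw [Finset.mem_filter, hPairs, Finset.mem_filter, Finset.mem_product]
      exact ⟨⟨⟨hw1.1, hw2.1⟩, hne, hcc⟩, hw1.2, hw2.2⟩
    exact le_trans key (Nat.add_le_add himg hoff)
  -- Sum of pair counts over lines is at most |Pairs|
  have hpairs_sum : ∑ l ∈ L, (Pairs.filter (onB l)).card ≤ Pairs.card := by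
    apply sum_filter_card_le
    intro w hw l hl l' hl' hB hB'
    rw [hPairs, Finset.mem_filter] at hw
    obtain ⟨hwP, hne, _⟩ := hw
    rw [Finset.mem_product] at hwP
    obtain ⟨ha, _⟩ := Finset.mem_product.mp hl
    obtain ⟨ha', _⟩ := Finset.mem_product.mp hl'
    have hal : (0:ℝ) < l.1 := hpos l.1 ha
    have hal' : (0:ℝ) < l'.1 := hpos l'.1 ha'
    rw [honB] at hB hB'
    obtain ⟨e1, e2⟩ := hB
    obtain ⟨e1', e2'⟩ := hB'
    have hq : w.1.2 ≠ w.2.2 := by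
      intro hq
      apply hne
      apply Prod.ext _ hq
      rw [e1, e2, hq]
    have haa : l.1 = l'.1 := by
      have hdiff : l.1 * (w.1.2 - w.2.2) = l'.1 * (w.1.2 - w.2.2) := by
        have := e1.symm.trans e1'
        have := e2.symm.trans e2'
        nlinarith [e1, e2, e1', e2']
      have hne2 : w.1.2 - w.2.2 ≠ 0 := sub_ne_zero_of_ne hq
      exact mul_right_cancel₀ hne2 hdiff
    have hss : l.2 = l'.2 := by
      have := e1.symm.trans e1'
      rw [← haa] at this
      have h2 : l.1 * (w.1.2 + l.2) = l.1 * (w.1.2 + l'.2) := this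
      have := mul_left_cancel₀ (ne_of_gt hal) h2
      linarith
    exact Prod.ext haa hss
  -- |Pairs| ≤ |P| * (u * v)
  have hPairs_card : Pairs.card ≤ P.card * (u * v) := by
    have hfib : Pairs.card = ∑ t ∈ P, (Pairs.filter fun w => w.1 = t).card := by
      apply Finset.card_eq_sum_card_fiberwise
      intro w hw
      rw [Finset.mem_coe, hPairs, Finset.mem_filter, Finset.mem_product] at hw
      exact hw.1.1
    rw [hfib]
    have hbound : ∀ t ∈ P, (Pairs.filter fun w => w.1 = t).card ≤ u * v := by
      intro t ht
      have hstep : (Pairs.filter fun w => w.1 = t).card ≤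
          (P.filter fun q => cmap q = cmap t).card := by
        apply Finset.card_le_card_of_injOn (fun w => w.2)
        · intro w hw
          simp only [Finset.mem_coe, Finset.mem_filter, hPairs, Finset.mem_product] at hw
          obtain ⟨⟨⟨_, hw2⟩, _, hcc⟩, hwt⟩ := hw
          rw [Finset.mem_coe, Finset.mem_filter]
          rw [hwt] at hcc
          exact ⟨hw2, hcc.symm⟩
        · intro w hw w' hw' h
          rw [Finset.mem_coe, Finset.mem_filter] at hw hw'
          exact Prod.ext (hw.2.trans hw'.2.symm) h
      refine le_trans hstep ?_
      have hsub : (P.filter fun q => cmap q = cmap t) ⊆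
          (X.filter fun x => rIdx X u x = (cmap t).1) ×ˢ
            (Y.filter fun y => rIdx Y v y = (cmap t).2) := by
        intro q hq
        rw [Finset.mem_filter] at hq
        obtain ⟨hqP, hqc⟩ := hq
        rw [hPdef, Finset.mem_product] at hqP
        rw [Finset.mem_product, Finset.mem_filter, Finset.mem_filter]
        have h1 : rIdx X u q.1 = (cmap t).1 := by rw [← hqc]
        have h2 : rIdx Y v q.2 = (cmap t).2 := by rw [← hqc]
        exact ⟨⟨hqP.1, h1⟩, hqP.2, h2⟩
      calc (P.filter fun q => cmap q = cmap t).card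
          ≤ _ := Finset.card_le_card hsub
        _ = (X.filter fun x => rIdx X u x = (cmap t).1).card *
            (Y.filter fun y => rIdx Y v y = (cmap t).2).card := Finset.card_product _ _
        _ ≤ u * v := Nat.mul_le_mul (rIdx_fiber X hu0 _) (rIdx_fiber Y hv0 _)
    calc ∑ t ∈ P, (Pairs.filter fun w => w.1 = t).card
        ≤ ∑ _t ∈ P, (u * v) := Finset.sum_le_sum hbound
      _ = P.card * (u * v) := by rw [Finset.sum_const, smul_eq_mul]
  -- Combine: total incidence bounds
  have hlow : τ * ((A.card : ℝ) * S.card) ≤ ∑ l ∈ L, ((inc l).card : ℝ) := by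
    calc τ * ((A.card : ℝ) * S.card) = ∑ _l ∈ L, τ := by
          rw [Finset.sum_const, hLdef, Finset.card_product]
          push_cast
          ring
      _ ≤ ∑ l ∈ L, ((inc l).card : ℝ) := Finset.sum_le_sum hinc_lower
  have hup : (∑ l ∈ L, ((inc l).card : ℝ)) ≤
      2 * r * ((A.card : ℝ) * S.card) + (P.card : ℝ) * (u * v) := by
    have hN : ∑ l ∈ L, (inc l).card ≤ 2 * r * (A.card * S.card) + P.card * (u * v) := by
      calc ∑ l ∈ L, (inc l).card
          ≤ ∑ l ∈ L, (2 * r + (Pairs.filter (onB l)).card) :=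
            Finset.sum_le_sum hinc_upper
        _ = L.card * (2 * r) + ∑ l ∈ L, (Pairs.filter (onB l)).card := by
            rw [Finset.sum_add_distrib, Finset.sum_const, smul_eq_mul]
        _ ≤ L.card * (2 * r) + Pairs.card := Nat.add_le_add_left hpairs_sum _
        _ = 2 * r * (A.card * S.card) + Pairs.card := by
            rw [hLdef, Finset.card_product, Nat.mul_comm]
        _ ≤ 2 * r * (A.card * S.card) + P.card * (u * v) :=
            Nat.add_le_add_left hPairs_card _
    calc ∑ l ∈ L, ((inc l).card : ℝ) = ((∑ l ∈ L, (inc l).card : ℕ) : ℝ) := by push_cast; ring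
      _ ≤ ((2 * r * (A.card * S.card) + P.card * (u * v) : ℕ) : ℝ) := by exact_mod_cast hN
      _ = 2 * r * ((A.card : ℝ) * S.card) + (P.card : ℝ) * (u * v) := by push_cast; ring
  -- Now the real-number endgame
  have hPcard : (P.card : ℝ) = (X.card : ℝ) * Y.card := by
    rw [hPdef, Finset.card_product]; push_cast; ring
  have hXcard1 : τ ≤ 8 * (X.card : ℝ) := by
    have : (A.card : ℝ) ≤ X.card := by exact_mod_cast hAX
    linarith
  have hucast : (u : ℝ) ≤ 16 * (X.card : ℝ) / τ := by
    have h1 : (u : ℝ) ≤ (X.card : ℝ) / r + 1 := by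
      rw [hudef]
      push_cast
      have := Nat.cast_div_le (α := ℝ) (m := X.card) (n := r)
      linarith
    have hr8 : τ / 8 ≤ (r : ℝ) := by linarith
    have hrpos : (0:ℝ) < r := by
      have : (1:ℝ) ≤ r := by exact_mod_cast hr1
      linarith
    have h2 : (X.card : ℝ) / r ≤ (X.card : ℝ) / (τ / 8) :=
      div_le_div_of_nonneg_left (Nat.cast_nonneg _) (by positivity) hr8
    have h3 : (X.card : ℝ) / (τ / 8) = 8 * X.card / τ := by
      field_simp
    have h4 : (1:ℝ) ≤ 8 * X.card / τ := by
      rw [le_div_iff₀ hτ0]; linarith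
    have h5 : (u:ℝ) ≤ 8 * X.card / τ + 8 * X.card / τ := by
      rw [h3] at h2; linarith
    have h6 : 8 * (X.card:ℝ) / τ + 8 * X.card / τ = 16 * X.card / τ := by ring
    linarith
  have hvcast : (v : ℝ) ≤ 16 * (Y.card : ℝ) / τ := by
    have h1 : (v : ℝ) ≤ (Y.card : ℝ) / r + 1 := by
      rw [hvdef]
      push_cast
      have := Nat.cast_div_le (α := ℝ) (m := Y.card) (n := r)
      linarith
    have hr8 : τ / 8 ≤ (r : ℝ) := by linarith
    have hrpos : (0:ℝ) < r := by
      have : (1:ℝ) ≤ r := by exact_mod_cast hr1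
      linarith
    have h2 : (Y.card : ℝ) / r ≤ (Y.card : ℝ) / (τ / 8) :=
      div_le_div_of_nonneg_left (Nat.cast_nonneg _) (by positivity) hr8
    have h3 : (Y.card : ℝ) / (τ / 8) = 8 * Y.card / τ := by
      field_simp
    have h4 : (1:ℝ) ≤ 8 * Y.card / τ := by
      rw [le_div_iff₀ hτ0]; linarith
    have h5 : (v:ℝ) ≤ 8 * Y.card / τ + 8 * Y.card / τ := by
      rw [h3] at h2; linarith
    have h6 : 8 * (Y.card:ℝ) / τ + 8 * Y.card / τ = 16 * Y.card / τ := by ring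
    linarith
  -- r small: 2r ≤ τ/2
  have h2r : 2 * (r:ℝ) ≤ τ / 2 := by linarith
  -- Main inequality
  have hmain : (τ / 2) * ((A.card : ℝ) * S.card) ≤ (P.card : ℝ) * ((u:ℝ) * v) := by
    have hcomb := le_trans hlow hup
    have hAS0 : (0:ℝ) ≤ (A.card : ℝ) * S.card := by positivity
    have h6 : 2 * (r:ℝ) * ((A.card : ℝ) * S.card) ≤ (τ/2) * ((A.card : ℝ) * S.card) :=
      mul_le_mul_of_nonneg_right h2r hAS0
    linarith
  have hXM : (X.card : ℝ) ≤ M * A.card := hprod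
  have hu0' : (0:ℝ) ≤ u := Nat.cast_nonneg u
  have hv0' : (0:ℝ) ≤ v := Nat.cast_nonneg v
  have hfinal : (τ / 2) * ((A.card : ℝ) * S.card) ≤
      256 * M^2 * (A.card:ℝ)^2 * (Y.card:ℝ)^2 / τ^2 := by
    refine le_trans hmain ?_
    rw [hPcard]
    have hX0 : (0:ℝ) ≤ X.card := Nat.cast_nonneg _
    have hY0 : (0:ℝ) ≤ Y.card := Nat.cast_nonneg _
    have hMA0 : (0:ℝ) ≤ M * A.card := by positivity
    calc (X.card : ℝ) * Y.card * ((u:ℝ) * v)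
        ≤ (M * A.card) * Y.card * ((16 * X.card / τ) * (16 * Y.card / τ)) := by
          apply mul_le_mul
          · exact mul_le_mul_of_nonneg_right hXM hY0
          · apply mul_le_mul hucast hvcast hv0'
            positivity
          · positivity
          · positivity
      _ ≤ (M * A.card) * Y.card * ((16 * (M * A.card) / τ) * (16 * Y.card / τ)) := by
          apply mul_le_mul_of_nonneg_left _ (by positivity)
          apply mul_le_mul_of_nonneg_right _ (by positivity)
          apply (div_le_div_iff_of_pos_right hτ0).mpr
          linarith
      _ = 256 * M^2 * (A.card:ℝ)^2 * (Y.card:ℝ)^2 / τ^2 := by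
          field_simp
          ring
  -- endgame
  have hA0 : (0:ℝ) < (A.card : ℝ) := lt_of_lt_of_le one_pos hA1
  have h7 : (τ / 2) * ((A.card : ℝ) * S.card) * τ^2 ≤
      256 * M^2 * (A.card:ℝ)^2 * (Y.card:ℝ)^2 := by
    have := mul_le_mul_of_nonneg_right hfinal (sq_nonneg τ)
    have hne : τ^2 ≠ 0 := by positivity
    rw [div_mul_cancel₀ _ hne] at this
    exact this
  rw [← mul_le_mul_iff_of_pos_right hA0]
  nlinarith [h7]
end
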